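/- Let G = (φ1, φ2, X1, X2) be a coalitional Blotto game with inefficiency parameter β ∈ (0,1], and suppose φ2·X1 < φ1·X2. Then every mutually beneficial transfer τ satisfies τ < 0, i.e., resources are sent from Player 2 to Player 1. -/

import Mathlib

noncomputable section

/-- Adversary's optimal allocation to game 1, assuming `φ2 * Y1 ≤ φ1 * Y2`.
Cases are checked in the order: Case 4, Case 1, Case 2, Case 3. -/
noncomputable def allocAux (φ1 φ2 Y1 Y2 : ℝ) : ℝ :=
  if φ2 * Y1 = φ1 * Y2 ∧ 1 ≤ Y1 + Y2 then Y1 / (Y1 + Y2)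
  else if φ2 ≤ φ1 * Y1 * Y2 then 1
  else if 1 - Real.sqrt (φ1 * Y1 * Y2 / φ2) ≤ Y2 then Real.sqrt (φ1 * Y1 * Y2 / φ2)
  else Real.sqrt (φ1 * Y1) / (Real.sqrt (φ1 * Y1) + Real.sqrt (φ2 * Y2))

/-- Adversary's optimal allocation to game 1; when `φ2 * Y1 > φ1 * Y2`, the
roles of the two players are swapped. -/
noncomputable def alloc1 (φ1 φ2 Y1 Y2 : ℝ) : ℝ :=
  if φ2 * Y1 ≤ φ1 * Y2 then allocAux φ1 φ2 Y1 Y2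
  else 1 - allocAux φ2 φ1 Y2 Y1

/-- Equilibrium payoff of a player with valuation `φ`, budget `Y`, facing
adversary allocation `XA`. -/
noncomputable def payoff (φ Y XA : ℝ) : ℝ :=
  if XA = 0 then φ
  else if Y ≤ XA then φ * Y / (2 * XA)
  else φ * (1 - XA / (2 * Y))

/-- Player 1's post-transfer budget. -/
noncomputable def Xbar1 (β X1 τ : ℝ) : ℝ := if 0 ≤ τ then X1 - τ else X1 - β * τ

/-- Player 2's post-transfer budget. -/
noncomputable def Xbar2 (β X2 τ : ℝ) : ℝ := if 0 ≤ τ then X2 + β * τ else X2 + τ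

/-- Player 1's equilibrium payoff `U_1(τ; G)` after transfer `τ`. -/
noncomputable def U1 (φ1 φ2 X1 X2 β τ : ℝ) : ℝ :=
  payoff φ1 (Xbar1 β X1 τ) (alloc1 φ1 φ2 (Xbar1 β X1 τ) (Xbar2 β X2 τ))

/-- Player 2's equilibrium payoff `U_2(τ; G)` after transfer `τ`. -/
noncomputable def U2 (φ1 φ2 X1 X2 β τ : ℝ) : ℝ :=
  payoff φ2 (Xbar2 β X2 τ) (1 - alloc1 φ1 φ2 (Xbar1 β X1 τ) (Xbar2 β X2 τ))

/-- A transfer `τ ∈ (-X2, X1)` is mutually beneficial if it strictly improves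
both players' equilibrium payoffs relative to no transfer. -/
def MutuallyBeneficial (φ1 φ2 X1 X2 β τ : ℝ) : Prop :=
  -X2 < τ ∧ τ < X1 ∧
  U1 φ1 φ2 X1 X2 β τ > U1 φ1 φ2 X1 X2 β 0 ∧
  U2 φ1 φ2 X1 X2 β τ > U2 φ1 φ2 X1 X2 β 0

namespace CBProof

lemma le_of_sq_le_sq {x y : ℝ} (hx : 0 ≤ x) (hy : 0 ≤ y) (h : x^2 ≤ y^2) : x ≤ y := by
  nlinarith [sq_nonneg (x - y), sq_nonneg (x + y)]

noncomputable def W (p q a b : ℝ) : ℝ := Real.sqrt (p*q*a*b)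

lemma W_nonneg (p q a b : ℝ) : 0 ≤ W p q a b := Real.sqrt_nonneg _

lemma W_sq {p q a b : ℝ} (hp : 0 < p) (hq : 0 < q) (ha : 0 < a) (hb : 0 < b) :
    (W p q a b)^2 = p*q*a*b := Real.sq_sqrt (by positivity)

lemma W_pos {p q a b : ℝ} (hp : 0 < p) (hq : 0 < q) (ha : 0 < a) (hb : 0 < b) :
    0 < W p q a b := Real.sqrt_pos.2 (by positivity)

noncomputable def E1 (p a : ℝ) : ℝ := if a ≤ 1 then p*a/2 else p*(1 - 1/(2*a))

lemma E1_le {p a : ℝ} (hp : 0 < p) (ha : 0 < a) : E1 p a ≤ p*a/2 := by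
  unfold E1
  split_ifs with h
  · exact le_rfl
  · push_neg at h
    have h1 : p*(1 - 1/(2*a)) ≤ p*(a/2) := by
      apply mul_le_mul_of_nonneg_left _ hp.le
      have e : a/2 - (1 - 1/(2*a)) = (a-1)^2/(2*a) := by field_simp; ring
      nlinarith [sq_nonneg (a-1), div_nonneg (sq_nonneg (a-1)) (by linarith : (0:ℝ) ≤ 2*a), e]
    linarith [h1]

lemma E1_half {p a : ℝ} (hp : 0 < p) (ha : 1 < a) : p/2 ≤ E1 p a := by
  unfold E1
  rw [if_neg (by linarith)]
  have h1 : 1/(2*a) ≤ 1/2 := by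
    apply one_div_le_one_div_of_le <;> linarith
  nlinarith [h1]

lemma E1_mono {p u x : ℝ} (hp : 0 < p) (hu : 0 < u) (hux : u ≤ x) : E1 p u ≤ E1 p x := by
  unfold E1
  split_ifs with h1 h2 h2
  · nlinarith
  · push_neg at h2
    have h3 : 1/(2*x) ≤ 1/2 := by
      apply one_div_le_one_div_of_le <;> linarith
    nlinarith [h3]
  · linarith
  · push_neg at h1
    have h3 : 1/(2*x) ≤ 1/(2*u) := by
      apply one_div_le_one_div_of_le <;> linarith
    nlinarith [h3]

noncomputable def PV (p q a b : ℝ) : ℝ :=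
  if q ≤ p*a*b then E1 p a
  else if q ≤ q*b + W p q a b then W p q a b/(2*b)
  else (p*a + W p q a b)/2

noncomputable def M (p q a b : ℝ) : ℝ :=
  min (max (E1 p a) (W p q a b/(2*b))) ((p*a + W p q a b)/2)

lemma cond_iff {p q a b : ℝ} (hq : 0 < q) :
    (1 - W p q a b / q ≤ b) ↔ q ≤ q*b + W p q a b := by
  rw [sub_le_iff_le_add, ← sub_le_iff_le_add', le_div_iff₀ hq]
  constructor <;> intro h <;> nlinarith

set_option maxHeartbeats 1000000 in
lemma payoff_eq_PV {p q a b : ℝ} (hp : 0 < p) (hq : 0 < q) (ha : 0 < a) (hb : 0 < b)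
    (hreg : q*a < p*b) : payoff p a (alloc1 p q a b) = PV p q a b := by
  have hw : (W p q a b)^2 = p*q*a*b := W_sq hp hq ha hb
  have hw0 : 0 < W p q a b := W_pos hp hq ha hb
  have hne : ¬(q*a = p*b ∧ 1 ≤ a + b) := by
    rintro ⟨h, -⟩; exact absurd h (ne_of_lt hreg)
  have hsab : Real.sqrt (p*a*b/q) = W p q a b / q := by
    have h1 : (W p q a b / q)^2 = p*a*b/q := by
      rw [div_pow, hw]; field_simp
    rw [← h1, Real.sqrt_sq (by positivity)]
  have haw : q*a ≤ W p q a b := by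
    apply le_of_sq_le_sq (by positivity) hw0.le
    rw [hw]; nlinarith [mul_le_mul_of_nonneg_left hreg.le (mul_nonneg hq.le ha.le)]
  rw [alloc1, if_pos hreg.le, allocAux, if_neg hne]
  by_cases h1 : q ≤ p*a*b
  · rw [if_pos h1, PV, if_pos h1, payoff, if_neg one_ne_zero, E1]
    split_ifs with h <;> ring
  · rw [if_neg h1, hsab, PV, if_neg h1]
    push_neg at h1
    by_cases h2 : 1 - W p q a b / q ≤ b
    · rw [if_pos h2, if_pos ((cond_iff hq).1 h2)]
      have haw' : a ≤ W p q a b / q := by rw [le_div_iff₀ hq]; linarith [haw]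
      rw [payoff, if_neg (div_pos hw0 hq).ne', if_pos haw']
      field_simp
      linear_combination (-1 : ℝ)*hw
    · rw [if_neg h2, if_neg (fun hc => h2 ((cond_iff hq).2 hc))]
      push_neg at h2
      have hWq : W p q a b < q*(1-b) := by
        have h4 := (div_lt_iff₀ hq).1 (by linarith : W p q a b / q < 1 - b)
        nlinarith [h4]
      set g := Real.sqrt (p*a) with hgdef
      set h := Real.sqrt (q*b) with hhdef
      have hg : g^2 = p*a := Real.sq_sqrt (by positivity)
      have hh : h^2 = q*b := Real.sq_sqrt (by positivity)
      have hg0 : 0 < g := Real.sqrt_pos.2 (by positivity)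
      have hh0 : 0 < h := Real.sqrt_pos.2 (by positivity)
      have hgh : g*h = W p q a b := by
        rw [hgdef, hhdef, ← Real.sqrt_mul (by positivity), W]
        congr 1; ring
      have hab1 : a + b < 1 := by
        have h3 : a ≤ W p q a b / q := by rw [le_div_iff₀ hq]; linarith [haw]
        linarith
      have hwpb : W p q a b ≤ p*b := by
        apply le_of_sq_le_sq hw0.le (by positivity)
        rw [hw]; nlinarith [mul_le_mul_of_nonneg_left hreg.le (mul_nonneg hp.le hb.le)]
      have hWpa : W p q a b < p*(1-a) := by nlinarith
      have h1a : a*h ≤ g*(1-a) := by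
        apply le_of_sq_le_sq (by positivity) (by nlinarith)
        have e1 : (a*h)^2 = a^2*(q*b) := by rw [mul_pow, hh]
        have e2 : (g*(1-a))^2 = (p*a)*(1-a)^2 := by rw [mul_pow, hg]
        rw [e1, e2]
        have hsq : W p q a b * W p q a b ≤ (p*(1-a))*(p*(1-a)) :=
          mul_le_mul hWpa.le hWpa.le hw0.le (by nlinarith)
        nlinarith [mul_le_mul_of_nonneg_left hsq ha.le, hw, hp, ha]
      have hgh0 : 0 < g + h := by linarith
      have halloc : a ≤ g/(g+h) := by rw [le_div_iff₀ hgh0]; nlinarith [h1a]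
      rw [payoff, if_neg (div_pos hg0 hgh0).ne', if_pos halloc]
      rw [← hgh, ← hg]
      have hg' : g ≠ 0 := hg0.ne'
      have hghne : g + h ≠ 0 := hgh0.ne'
      field_simp

lemma PV_le_M {p q a b : ℝ} (hp : 0 < p) (hq : 0 < q) (ha : 0 < a) (hb : 0 < b)
    (hreg : q*a < p*b) : PV p q a b ≤ M p q a b := by
  have hw : (W p q a b)^2 = p*q*a*b := W_sq hp hq ha hb
  have hw0 : 0 < W p q a b := W_pos hp hq ha hb
  unfold PV M
  split_ifs with h1 h2
  · refine le_min (le_max_left _ _) ?_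
    have := E1_le hp ha
    linarith [hw0.le]
  · refine le_min (le_max_right _ _) ?_
    rw [div_le_div_iff₀ (by positivity) (by norm_num)]
    nlinarith [mul_le_mul_of_nonneg_left (by linarith : q - q*b ≤ W p q a b) hw0.le, hw, hq]
  · refine le_min (le_trans ?_ (le_max_right _ _)) le_rfl
    push_neg at h2
    rw [div_le_div_iff₀ (by norm_num) (by positivity)]
    nlinarith [mul_lt_mul_of_pos_left (by linarith : W p q a b < q - q*b) hw0, hw, hq]

lemma M_le_PV {p q a b : ℝ} (hp : 0 < p) (hq : 0 < q) (ha : 0 < a) (hb : 0 < b)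
    (hreg : q*a < p*b) : M p q a b ≤ PV p q a b := by
  have hw : (W p q a b)^2 = p*q*a*b := W_sq hp hq ha hb
  have hw0 : 0 < W p q a b := W_pos hp hq ha hb
  unfold M PV
  split_ifs with h1 h2
  · have hWpab : W p q a b ≤ p*a*b := by
      apply le_of_sq_le_sq hw0.le (by positivity)
      rw [hw]; nlinarith [mul_le_mul_of_nonneg_left h1 (by positivity : (0:ℝ) ≤ p*a*b)]
    have hWpb : W p q a b ≤ p*b := by
      apply le_of_sq_le_sq hw0.le (by positivity)
      rw [hw]; nlinarith [mul_le_mul_of_nonneg_left hreg.le (mul_nonneg hp.le hb.le)]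
    have hE : W p q a b/(2*b) ≤ E1 p a := by
      rcases le_or_gt a 1 with h | h
      · rw [E1, if_pos h, div_le_div_iff₀ (by positivity) (by norm_num)]
        nlinarith [hWpab]
      · refine le_trans ?_ (E1_half hp h)
        rw [div_le_div_iff₀ (by positivity) (by norm_num)]
        nlinarith [hWpb]
    calc min (max (E1 p a) (W p q a b/(2*b))) ((p*a + W p q a b)/2)
        ≤ max (E1 p a) (W p q a b/(2*b)) := min_le_left _ _
      _ = E1 p a := max_eq_left hE
  · push_neg at h1
    have hpabW : p*a*b ≤ W p q a b := by
      apply le_of_sq_le_sq (by positivity) hw0.le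
      rw [hw]; nlinarith [mul_le_mul_of_nonneg_left h1.le (by positivity : (0:ℝ) ≤ p*a*b)]
    have hE : E1 p a ≤ W p q a b/(2*b) := by
      refine le_trans (E1_le hp ha) ?_
      rw [div_le_div_iff₀ (by norm_num) (by positivity)]
      nlinarith [hpabW]
    calc min (max (E1 p a) (W p q a b/(2*b))) ((p*a + W p q a b)/2)
        ≤ max (E1 p a) (W p q a b/(2*b)) := min_le_left _ _
      _ = W p q a b/(2*b) := max_eq_right hE
  · exact min_le_right _ _

lemma E2_mono {p q u v x y : ℝ} (hp : 0 < p) (hq : 0 < q) (hu : 0 < u) (hy : 0 < y)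
    (hux : u ≤ x) (hyv : y ≤ v) : W p q u v/(2*v) ≤ W p q x y/(2*y) := by
  have hv : 0 < v := lt_of_lt_of_le hy hyv
  have hx : 0 < x := lt_of_lt_of_le hu hux
  have h1 := W_sq hp hq hu hv
  have h2 := W_sq hp hq hx hy
  apply le_of_sq_le_sq (div_nonneg (W_nonneg _ _ _ _) (by positivity))
    (div_nonneg (W_nonneg _ _ _ _) (by positivity))
  rw [div_pow, div_pow, h1, h2, div_le_div_iff₀ (by positivity) (by positivity)]
  nlinarith [mul_le_mul_of_nonneg_left (mul_le_mul hux hyv hy.le hx.le)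
    (by positivity : (0:ℝ) ≤ 4*(p*q*v*y))]

lemma E3_mono {p q u v x y : ℝ} (hp : 0 < p) (hq : 0 < q) (hu : 0 < u) (hy : 0 < y)
    (hux : u ≤ x) (hyv : y ≤ v) (hpath : v ≤ y + (x - u)) (hquv : q*u ≤ p*v) :
    (p*u + W p q u v)/2 ≤ (p*x + W p q x y)/2 := by
  have hv : 0 < v := lt_of_lt_of_le hy hyv
  have hx : 0 < x := lt_of_lt_of_le hu hux
  set s := W p q u v with hsdef
  set t := W p q x y with htdef
  have hs2 : s^2 = p*q*u*v := W_sq hp hq hu hv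
  have ht2 : t^2 = p*q*x*y := W_sq hp hq hx hy
  have hs0 : 0 < s := W_pos hp hq hu hv
  have ht0 : 0 < t := W_pos hp hq hx hy
  have hsqu : q*u ≤ s := by
    apply le_of_sq_le_sq (by positivity) hs0.le
    rw [hs2]; nlinarith [mul_le_mul_of_nonneg_left hquv (mul_nonneg hq.le hu.le)]
  rcases le_or_gt s t with hst | hst
  · nlinarith [mul_nonneg hp.le (by linarith : (0:ℝ) ≤ x - u)]
  · have h1 : s^2 - t^2 ≤ p*q*u*(x-u) := by
      rw [hs2, ht2]
      nlinarith [mul_le_mul_of_nonneg_left hpath (by positivity : (0:ℝ) ≤ p*q*u),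
        mul_le_mul_of_nonneg_left hux (by positivity : (0:ℝ) ≤ p*q*y)]
    have key : (s - t)*s ≤ (p*(x - u))*s := by
      nlinarith [mul_nonneg ht0.le (by linarith : (0:ℝ) ≤ s - t),
        mul_le_mul_of_nonneg_left
          (mul_le_mul_of_nonneg_right hsqu (by linarith : (0:ℝ) ≤ x - u)) hp.le]
    have := le_of_mul_le_mul_right key hs0
    linarith

lemma payoff_mono {p q u v x y : ℝ} (hp : 0 < p) (hq : 0 < q) (hu : 0 < u) (hy : 0 < y)
    (hux : u ≤ x) (hyv : y ≤ v) (hpath : v ≤ y + (x - u)) (hreg : q*x < p*y) :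
    payoff p u (alloc1 p q u v) ≤ payoff p x (alloc1 p q x y) := by
  have hv : 0 < v := lt_of_lt_of_le hy hyv
  have hx : 0 < x := lt_of_lt_of_le hu hux
  have hregu : q*u < p*v := by
    calc q*u ≤ q*x := by nlinarith
      _ < p*y := hreg
      _ ≤ p*v := by nlinarith
  rw [payoff_eq_PV hp hq hu hv hregu, payoff_eq_PV hp hq hx hy hreg]
  calc PV p q u v ≤ M p q u v := PV_le_M hp hq hu hv hregu
    _ ≤ M p q x y := min_le_min
        (max_le_max (E1_mono hp hu hux) (E2_mono hp hq hu hy hux hyv))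
        (E3_mono hp hq hu hy hux hyv hpath hregu.le)
    _ ≤ PV p q x y := M_le_PV hp hq hx hy hreg

end CBProof

/-- **Theorem 1 (direction part).** In a coalitional Blotto game with
`φ2·X1 < φ1·X2`, every mutually beneficial transfer is negative, i.e.,
resources are sent from Player 2 to Player 1. -/
theorem mutually_beneficial_transfer_neg (φ1 φ2 X1 X2 β : ℝ)
    (hφ1 : 0 < φ1) (hφ2 : 0 < φ2) (hX1 : 0 < X1) (hX2 : 0 < X2)
    (hβ0 : 0 < β) (hβ1 : β ≤ 1) (hord : φ2 * X1 < φ1 * X2) :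
    ∀ τ : ℝ, MutuallyBeneficial φ1 φ2 X1 X2 β τ → τ < 0 := by
  intro τ hMB
  by_contra hneg
  push_neg at hneg
  obtain ⟨-, h2, hU1, -⟩ := hMB
  have hb1 : Xbar1 β X1 τ = X1 - τ := if_pos hneg
  have hb2 : Xbar2 β X2 τ = X2 + β * τ := if_pos hneg
  have h01 : Xbar1 β X1 0 = X1 := by simp [Xbar1]
  have h02 : Xbar2 β X2 0 = X2 := by simp [Xbar2]
  have hmono := CBProof.payoff_mono (u := X1 - τ) (v := X2 + β * τ) (x := X1) (y := X2)
    hφ1 hφ2 (by linarith) hX2 (by linarith)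
    (by nlinarith [mul_nonneg hβ0.le hneg])
    (by nlinarith [mul_le_mul_of_nonneg_right hβ1 hneg])
    hord
  rw [U1, U1, hb1, hb2, h01, h02] at hU1
  linarith [hmono]
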